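/- Let f : ℂ → ℂ be entire (complex-differentiable on all of ℂ) with f(x) ∈ ℝ for every x ∈ ℝ. Let U ⊆ ℝ² be an open set containing ℝ×{0} such that for every (x,y) ∈ U the vertical segment {x}×[min(0,y), max(0,y)] is contained in U. Let h : U → ℂ be smooth with h(x,0) = x whenever (x,0) ∈ U and ∂_y h(x,y) = i·f(h(x,y)) for all (x,y) ∈ U. Then f(x)·∂_x h(x,y) = f(h(x,y)) for all (x,y) ∈ U; consequently (1/2)·(f(x)·∂_x h − i·∂_y h)(x,y) = f(h(x,y)) and (1/2)·(f(x)·∂_x h + i·∂_y h)(x,y) = 0 on U, i.e. the vector field (1/2)(f(x)∂_x − i∂_y) is h-related to the holomorphic vector field f(z)∂_z. -/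

import Mathlib

/-!
STATEMENT 14.  Let `f : ℂ → ℂ` be entire and real on `ℝ`.  Let `U ⊆ ℝ²` be open,
containing `ℝ×{0}` and closed under vertical segments to the `x`-axis.  If `h : U → ℂ`
is smooth with `h(x,0) = x` and `∂_y h = i·f(h)` (the imaginary-time flow of `f(z)∂_z`),
then `f(x)·∂ₓh = f(h)` on `U`; consequently `(1/2)(f(x)∂ₓ − i∂_y)h = f(h)` and
`(1/2)(f(x)∂ₓ + i∂_y)h = 0`, i.e. `(1/2)(f(x)∂ₓ − i∂_y)` is `h`-related to `f(z)∂_z`.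
-/

/-- Uniqueness for the linear ODE `z' = c(t)·z` along the segment from `0` to `y`. -/
lemma stmt14_lin_ODE_uniq (c : ℝ → ℂ) (y : ℝ) (hc : ContinuousOn c (Set.uIcc 0 y))
    (α β : ℝ → ℂ)
    (hα : ∀ t ∈ Set.uIcc 0 y, HasDerivAt α (c t * α t) t)
    (hβ : ∀ t ∈ Set.uIcc 0 y, HasDerivAt β (c t * β t) t)
    (h0 : α 0 = β 0) : α y = β y := by
  obtain ⟨C, hC⟩ := (isCompact_uIcc (a := (0:ℝ)) (b := y)).exists_bound_of_continuousOn hc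
  set K : NNReal := ⟨max C 0, le_max_right _ _⟩ with hK
  have hlip : ∀ m : ℂ, ‖m‖ ≤ K → LipschitzWith K (fun z => m * z) := by
    intro m hm
    refine LipschitzWith.of_dist_le_mul fun z w => ?_
    simp only [dist_eq_norm, ← mul_sub, norm_mul]
    exact mul_le_mul_of_nonneg_right hm (norm_nonneg _)
  rcases le_or_gt 0 y with hy | hy
  · -- y ≥ 0 : interval Icc 0 y
    have huicc : Set.uIcc (0:ℝ) y = Set.Icc 0 y := Set.uIcc_of_le hy
    set cl : ℝ → ℝ := fun t => max 0 (min t y) with hcl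
    have hclmem : ∀ t, cl t ∈ Set.Icc 0 y := fun t =>
      ⟨le_max_left _ _, max_le hy (min_le_right _ _)⟩
    have hcleq : ∀ t ∈ Set.Ico 0 y, cl t = t := by
      intro t ht
      simp [hcl, min_eq_left ht.2.le, max_eq_right ht.1]
    set v : ℝ → ℂ → ℂ := fun t z => c (cl t) * z with hv
    have hlipv : ∀ t, LipschitzOnWith K (v t) (Set.univ) := by
      intro t
      refine (hlip _ ?_).lipschitzOnWith
      have := hC _ (huicc ▸ hclmem t)
      exact this.trans (le_max_left _ _)
    have key := ODE_solution_unique_of_mem_Icc_right (v := v) (s := fun _ => Set.univ) (fun t _ => hlipv t)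
      (fun t ht => (hα t (huicc ▸ ht)).continuousAt.continuousWithinAt)
      (fun t ht => by
        have := (hα t (huicc ▸ Set.Ico_subset_Icc_self ht)).hasDerivWithinAt (s := Set.Ici t)
        simpa only [v, hcleq t ht] using this)
      (fun _ _ => trivial)
      (fun t ht => (hβ t (huicc ▸ ht)).continuousAt.continuousWithinAt)
      (fun t ht => by
        have := (hβ t (huicc ▸ Set.Ico_subset_Icc_self ht)).hasDerivWithinAt (s := Set.Ici t)
        simpa only [v, hcleq t ht] using this)
      (fun _ _ => trivial) h0
    exact key (Set.right_mem_Icc.2 hy)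
  · -- y < 0 : interval Icc y 0
    have huicc : Set.uIcc (0:ℝ) y = Set.Icc y 0 := Set.uIcc_of_ge hy.le
    set cl : ℝ → ℝ := fun t => max y (min t 0) with hcl
    have hclmem : ∀ t, cl t ∈ Set.Icc y 0 := fun t =>
      ⟨le_max_left _ _, max_le hy.le (min_le_right _ _)⟩
    have hcleq : ∀ t ∈ Set.Ioc y 0, cl t = t := by
      intro t ht
      simp [hcl, min_eq_left ht.2, max_eq_right ht.1.le]
    set v : ℝ → ℂ → ℂ := fun t z => c (cl t) * z with hv
    have hlipv : ∀ t, LipschitzOnWith K (v t) (Set.univ) := by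
      intro t
      refine (hlip _ ?_).lipschitzOnWith
      exact (hC _ (huicc ▸ hclmem t)).trans (le_max_left _ _)
    have key := ODE_solution_unique_of_mem_Icc_left (v := v) (s := fun _ => Set.univ) (fun t _ => hlipv t)
      (fun t ht => (hα t (huicc ▸ ht)).continuousAt.continuousWithinAt)
      (fun t ht => by
        have := (hα t (huicc ▸ Set.Ioc_subset_Icc_self ht)).hasDerivWithinAt (s := Set.Iic t)
        simpa only [v, hcleq t ht] using this)
      (fun _ _ => trivial)
      (fun t ht => (hβ t (huicc ▸ ht)).continuousAt.continuousWithinAt)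
      (fun t ht => by
        have := (hβ t (huicc ▸ Set.Ioc_subset_Icc_self ht)).hasDerivWithinAt (s := Set.Iic t)
        simpa only [v, hcleq t ht] using this)
      (fun _ _ => trivial) h0
    exact key (Set.left_mem_Icc.2 hy.le)

/-- Main computation: `f(x)·∂ₓh = f∘h` on `U`. -/
lemma stmt14_key (f : ℂ → ℂ) (hf : Differentiable ℂ f)
    (U : Set (ℝ × ℝ)) (hU : IsOpen U) (hax : ∀ x : ℝ, (x, (0 : ℝ)) ∈ U)
    (hseg : ∀ p ∈ U, ∀ t ∈ Set.uIcc (0 : ℝ) p.2, (p.1, t) ∈ U)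
    (h : ℝ × ℝ → ℂ) (hh : ContDiffOn ℝ (⊤ : ℕ∞) h U)
    (hinit : ∀ x : ℝ, (x, (0 : ℝ)) ∈ U → h (x, 0) = (x : ℂ))
    (hode : ∀ p ∈ U, fderiv ℝ h p ((0, 1) : ℝ × ℝ) = Complex.I * f (h p)) :
    ∀ p ∈ U, f (p.1 : ℂ) * fderiv ℝ h p ((1, 0) : ℝ × ℝ) = f (h p) := by
  -- derivative of f and basic regularity facts
  have hfc : ContDiff ℂ 2 f := by
    have : AnalyticOnNhd ℂ f Set.univ := fun z _ => hf.analyticAt z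
    exact this.contDiff
  have hf'cont : Continuous (deriv f) := hfc.continuous_deriv one_le_two
  have hD : ∀ q ∈ U, HasFDerivAt h (fderiv ℝ h q) q := fun q hq =>
    ((hh.contDiffAt (hU.mem_nhds hq)).differentiableAt (by norm_cast)).hasFDerivAt
  have hDc : ContDiffOn ℝ (⊤ : ℕ∞) (fderiv ℝ h) U := hh.fderiv_of_isOpen hU (by norm_cast)
  have hD2 : ∀ q ∈ U, HasFDerivAt (fderiv ℝ h) (fderiv ℝ (fderiv ℝ h) q) q := fun q hq =>
    ((hDc.contDiffAt (hU.mem_nhds hq)).differentiableAt (by norm_cast)).hasFDerivAt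
  have hsymm : ∀ q ∈ U, IsSymmSndFDerivAt ℝ h q := fun q hq =>
    (hh.contDiffAt (hU.mem_nhds hq)).isSymmSndFDerivAt (by simp only [minSmoothness_of_isRCLikeNormedField]; norm_cast)
  -- directional derivatives of h
  have hvert : ∀ x t : ℝ, (x, t) ∈ U →
      HasDerivAt (fun s => h (x, s)) (fderiv ℝ h (x, t) (0, 1)) t := by
    intro x t hq
    have := (hD _ hq).comp_hasDerivAt t ((hasDerivAt_const t x).prodMk (hasDerivAt_id t))
    exact this.congr_deriv (by simp)
  have hhor : ∀ x t : ℝ, (x, t) ∈ U →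
      HasDerivAt (fun s => h (s, t)) (fderiv ℝ h (x, t) (1, 0)) x := by
    intro x t hq
    have := (hD _ hq).comp_hasDerivAt x ((hasDerivAt_id x).prodMk (hasDerivAt_const x t))
    exact this.congr_deriv (by simp)
  -- chain rule for f along a real curve
  have hfcomp : ∀ (γ : ℝ → ℂ) (cc : ℂ) (t : ℝ), HasDerivAt γ cc t →
      HasDerivAt (fun s => f (γ s)) (deriv f (γ t) * cc) t := by
    intro γ cc t hγ
    have h1 : HasFDerivAt f (((1 : ℂ →L[ℂ] ℂ).smulRight (deriv f (γ t))).restrictScalars ℝ)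
        (γ t) := ((hf (γ t)).hasDerivAt.hasFDerivAt).restrictScalars ℝ
    have := h1.comp_hasDerivAt t hγ
    exact this.congr_deriv (by simp [mul_comm])
  -- vertical derivative of the horizontal partial, via symmetry of 2nd derivatives
  have hmix : ∀ q ∈ U, fderiv ℝ (fderiv ℝ h) q ((1, 0) : ℝ × ℝ) ((0, 1) : ℝ × ℝ)
      = Complex.I * (deriv f (h q) * fderiv ℝ h q ((1, 0) : ℝ × ℝ)) := by
    intro q hq
    have e1 : HasFDerivAt (fun p => fderiv ℝ h p ((0, 1) : ℝ × ℝ))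
        ((ContinuousLinearMap.apply ℝ ℂ ((0, 1) : ℝ × ℝ)).comp (fderiv ℝ (fderiv ℝ h) q)) q :=
      (ContinuousLinearMap.apply ℝ ℂ ((0, 1) : ℝ × ℝ)).hasFDerivAt.comp _ (hD2 q hq)
    have h1 : HasFDerivAt f (((1 : ℂ →L[ℂ] ℂ).smulRight (deriv f (h q))).restrictScalars ℝ)
        (h q) := ((hf (h q)).hasDerivAt.hasFDerivAt).restrictScalars ℝ
    have e2 : HasFDerivAt (fun p => Complex.I * f (h p))
        (Complex.I • ((((1 : ℂ →L[ℂ] ℂ).smulRight (deriv f (h q))).restrictScalars ℝ).comp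
          (fderiv ℝ h q))) q := (h1.comp q (hD q hq)).const_mul Complex.I
    have heq : (fun p => fderiv ℝ h p ((0, 1) : ℝ × ℝ)) =ᶠ[nhds q]
        (fun p => Complex.I * f (h p)) := Filter.eventuallyEq_of_mem (hU.mem_nhds hq) hode
    have e3 := e2.congr_of_eventuallyEq heq
    have e4 := e3.unique e1
    have := congrArg (fun (L : (ℝ × ℝ) →L[ℝ] ℂ) => L ((1, 0) : ℝ × ℝ)) e4
    simpa [mul_comm, mul_left_comm] using this.symm
  have hmixapp : ∀ x t : ℝ, (x, t) ∈ U →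
      HasDerivAt (fun s => fderiv ℝ h (x, s) ((1, 0) : ℝ × ℝ))
        (Complex.I * (deriv f (h (x, t)) * fderiv ℝ h (x, t) ((1, 0) : ℝ × ℝ))) t := by
    intro x t hq
    have e1 : HasFDerivAt (fun p => fderiv ℝ h p ((1, 0) : ℝ × ℝ))
        ((ContinuousLinearMap.apply ℝ ℂ ((1, 0) : ℝ × ℝ)).comp (fderiv ℝ (fderiv ℝ h) (x, t)))
        (x, t) :=
      (ContinuousLinearMap.apply ℝ ℂ ((1, 0) : ℝ × ℝ)).hasFDerivAt.comp _ (hD2 _ hq)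
    have := e1.comp_hasDerivAt t ((hasDerivAt_const t x).prodMk (hasDerivAt_id t))
    have e5 : fderiv ℝ (fderiv ℝ h) (x, t) ((0, 1) : ℝ × ℝ) ((1, 0) : ℝ × ℝ)
        = Complex.I * (deriv f (h (x, t)) * fderiv ℝ h (x, t) ((1, 0) : ℝ × ℝ)) := by
      rw [hsymm _ hq ((0, 1) : ℝ × ℝ) ((1, 0) : ℝ × ℝ)]
      exact hmix _ hq
    rw [← e5]
    exact this.congr_deriv (by simp)
  -- now fix a point
  rintro ⟨x, y⟩ hp
  have hmem : ∀ t ∈ Set.uIcc (0 : ℝ) y, (x, t) ∈ U := fun t ht => hseg (x, y) hp t ht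
  set α : ℝ → ℂ := fun t => f (x : ℂ) * fderiv ℝ h (x, t) ((1, 0) : ℝ × ℝ) with hα_def
  set β : ℝ → ℂ := fun t => f (h (x, t)) with hβ_def
  set c : ℝ → ℂ := fun t => Complex.I * deriv f (h (x, t)) with hc_def
  have hαd : ∀ t ∈ Set.uIcc (0 : ℝ) y, HasDerivAt α (c t * α t) t := by
    intro t ht
    have := (hmixapp x t (hmem t ht)).const_mul (f (x : ℂ))
    refine this.congr_deriv ?_
    simp only [α, c]
    ring
  have hβd : ∀ t ∈ Set.uIcc (0 : ℝ) y, HasDerivAt β (c t * β t) t := by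
    intro t ht
    have := hfcomp _ _ t (hvert x t (hmem t ht))
    rw [hode _ (hmem t ht)] at this
    convert this using 1
    simp only [β, c]
    ring
  have hccont : ContinuousOn c (Set.uIcc 0 y) := by
    have hhc : ContinuousOn (fun t => h (x, t)) (Set.uIcc 0 y) := by
      refine (hh.continuousOn.comp (by fun_prop) ?_)
      intro t ht
      exact hmem t ht
    exact continuousOn_const.mul (hf'cont.comp_continuousOn hhc)
  -- initial values agree
  have hx1 : fderiv ℝ h (x, 0) ((1, 0) : ℝ × ℝ) = 1 := by
    have h1 := hhor x 0 (hax x)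
    have h3 : (fun s : ℝ => h (s, 0)) = fun s : ℝ => (s : ℂ) :=
      funext fun s => hinit s (hax s)
    rw [h3] at h1
    have h2 : HasDerivAt (fun s : ℝ => (s : ℂ)) 1 x := by
      exact (Complex.ofRealCLM.hasDerivAt (x := x)).congr_deriv (by simp)
    exact h1.unique h2
  have h0 : α 0 = β 0 := by
    simp only [α, β, hx1, hinit x (hax x), mul_one]
  have := stmt14_lin_ODE_uniq c y hccont α β hαd hβd h0
  simpa [α, β] using this

theorem stmt_14 (f : ℂ → ℂ) (hf : Differentiable ℂ f)
    (hreal : ∀ x : ℝ, (f (x : ℂ)).im = 0)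
    (U : Set (ℝ × ℝ)) (hU : IsOpen U) (hax : ∀ x : ℝ, (x, (0 : ℝ)) ∈ U)
    (hseg : ∀ p ∈ U, ∀ t ∈ Set.uIcc (0 : ℝ) p.2, (p.1, t) ∈ U)
    (h : ℝ × ℝ → ℂ) (hh : ContDiffOn ℝ (⊤ : ℕ∞) h U)
    (hinit : ∀ x : ℝ, (x, (0 : ℝ)) ∈ U → h (x, 0) = (x : ℂ))
    (hode : ∀ p ∈ U, fderiv ℝ h p ((0, 1) : ℝ × ℝ) = Complex.I * f (h p)) :
    ∀ p ∈ U,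
      f (p.1 : ℂ) * fderiv ℝ h p ((1, 0) : ℝ × ℝ) = f (h p) ∧
      (1 / 2 : ℂ) * (f (p.1 : ℂ) * fderiv ℝ h p ((1, 0) : ℝ × ℝ)
        - Complex.I * fderiv ℝ h p ((0, 1) : ℝ × ℝ)) = f (h p) ∧
      (1 / 2 : ℂ) * (f (p.1 : ℂ) * fderiv ℝ h p ((1, 0) : ℝ × ℝ)
        + Complex.I * fderiv ℝ h p ((0, 1) : ℝ × ℝ)) = 0 := by
  intro p hp
  have k := stmt14_key f hf U hU hax hseg h hh hinit hode p hp
  refine ⟨k, ?_, ?_⟩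
  · rw [k, hode p hp]
    linear_combination (-(f (h p)) / 2) * Complex.I_sq
  · rw [k, hode p hp]
    linear_combination (f (h p) / 2) * Complex.I_sq
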